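/- If p is an odd prime then there exists a Hadamard matrix of order 2(p+1). -/

import Mathlib

open Matrix Finset

namespace Stmt15

section Char

variable {F : Type*} [Field F] [Fintype F] [DecidableEq F]

lemma autocorr (hF : ringChar F ≠ 2) {b : F} (hb : b ≠ 0) :
    ∑ x : F, quadraticChar F x * quadraticChar F (x + b) = -1 := by
  have key : ∀ x : F, x ≠ 0 →
      quadraticChar F x * quadraticChar F (x + b) = quadraticChar F (1 + b * x⁻¹) := by
    intro x hx
    have hxb : x + b = x * (1 + b * x⁻¹) := by field_simp
    rw [hxb, _root_.map_mul, ← mul_assoc, ← sq, quadraticChar_sq_one hx, one_mul]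
  calc ∑ x : F, quadraticChar F x * quadraticChar F (x + b)
      = ∑ x ∈ Finset.univ.erase (0 : F), quadraticChar F x * quadraticChar F (x + b) :=
        (Finset.sum_erase _ (by simp)).symm
    _ = ∑ x ∈ Finset.univ.erase (0 : F), quadraticChar F (1 + b * x⁻¹) :=
        Finset.sum_congr rfl fun x hx => key x (Finset.ne_of_mem_erase hx)
    _ = ∑ y ∈ Finset.univ.erase (1 : F), quadraticChar F y := by
        apply Finset.sum_nbij' (i := fun x => 1 + b * x⁻¹) (j := fun y => b * (y - 1)⁻¹)
        · intro x hx
          have hx0 : x ≠ 0 := Finset.ne_of_mem_erase hx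
          simp only [Finset.mem_erase, Finset.mem_univ, and_true]
          intro h
          have : b * x⁻¹ = 0 := by linear_combination h
          simp [hx0, hb] at this
        · intro y hy
          have hy1 : y ≠ 1 := Finset.ne_of_mem_erase hy
          simp only [Finset.mem_erase, Finset.mem_univ, and_true]
          exact mul_ne_zero hb (inv_ne_zero (sub_ne_zero.mpr hy1))
        · intro x hx
          have hx0 : x ≠ 0 := Finset.ne_of_mem_erase hx
          field_simp
          simp [hb]
        · intro y hy
          have hy1 : y ≠ 1 := Finset.ne_of_mem_erase hy
          have : y - 1 ≠ 0 := sub_ne_zero.mpr hy1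
          field_simp
          ring
        · intro x _; rfl
    _ = -1 := by
        rw [Finset.sum_erase_eq_sub (Finset.mem_univ (1 : F)), quadraticChar_sum_zero hF]
        simp

end Char

section Conf

variable (p : ℕ) [Fact p.Prime]

noncomputable def χ (x : ZMod p) : ℝ := ((quadraticChar (ZMod p) x : ℤ) : ℝ)

lemma χ_zero : χ p 0 = 0 := by simp [χ]

lemma χ_pm {x : ZMod p} (hx : x ≠ 0) : χ p x = 1 ∨ χ p x = -1 := by
  rcases quadraticChar_dichotomy hx with h | h <;> simp [χ, h]

lemma χ_sq {x : ZMod p} (hx : x ≠ 0) : χ p x * χ p x = 1 := by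
  rcases χ_pm p hx with h | h <;> rw [h] <;> ring

lemma χ_sum (hp2 : p ≠ 2) : ∑ x : ZMod p, χ p x = 0 := by
  have hF : ringChar (ZMod p) ≠ 2 := by rwa [ZMod.ringChar_zmod_n]
  have := quadraticChar_sum_zero hF
  unfold χ
  exact_mod_cast congrArg (Int.cast : ℤ → ℝ) this

lemma χ_autocorr (hp2 : p ≠ 2) {b : ZMod p} (hb : b ≠ 0) :
    ∑ x : ZMod p, χ p x * χ p (x + b) = -1 := by
  have hF : ringChar (ZMod p) ≠ 2 := by rwa [ZMod.ringChar_zmod_n]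
  have := autocorr hF hb
  unfold χ
  exact_mod_cast congrArg (Int.cast : ℤ → ℝ) this

noncomputable def C : Matrix (Option (ZMod p)) (Option (ZMod p)) ℝ :=
  Matrix.of fun i j =>
    match i, j with
    | none, none => 0
    | none, some _ => 1
    | some _, none => χ p (-1)
    | some x, some y => χ p (x - y)

@[simp] lemma C_nn : C p none none = 0 := rfl
@[simp] lemma C_ns (y : ZMod p) : C p none (some y) = 1 := rfl
@[simp] lemma C_sn (x : ZMod p) : C p (some x) none = χ p (-1) := rfl
@[simp] lemma C_ss (x y : ZMod p) : C p (some x) (some y) = χ p (x - y) := rfl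

lemma neg_one_ne_zero' : (-1 : ZMod p) ≠ 0 := by
  have : Nontrivial (ZMod p) := by
    have := (Fact.out : p.Prime).one_lt
    exact ZMod.nontrivial_iff.mpr (by omega)
  simpa using (neg_ne_zero.mpr (one_ne_zero : (1 : ZMod p) ≠ 0))

lemma C_entries (i j : Option (ZMod p)) :
    (i = j → C p i j = 0) ∧ (i ≠ j → C p i j = 1 ∨ C p i j = -1) := by
  constructor
  · rintro rfl
    match i with
    | none => simp
    | some x => simp [χ_zero]
  · intro hij
    match i, j with
    | none, none => exact absurd rfl hij
    | none, some y => simp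
    | some x, none => simpa using χ_pm p (neg_one_ne_zero' p)
    | some x, some y =>
      have : x - y ≠ 0 := sub_ne_zero.mpr (by simpa using hij)
      simpa using χ_pm p this

lemma CCt (hp2 : p ≠ 2) : C p * (C p)ᵀ = (p : ℝ) • 1 := by
  ext i j
  rw [Matrix.mul_apply]
  simp only [Matrix.transpose_apply, Matrix.smul_apply, Matrix.one_apply]
  match i, j with
  | none, none =>
    rw [Fintype.sum_option]
    simp [ZMod.card]
  | none, some x =>
    rw [Fintype.sum_option]
    simp only [C_nn, C_sn, C_ns, C_ss, zero_mul, one_mul, zero_add]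
    have : ∑ y : ZMod p, χ p (x - y) = ∑ u : ZMod p, χ p u :=
      Fintype.sum_equiv (Equiv.subLeft x) _ _ fun y => rfl
    rw [this, χ_sum p hp2]
    simp
  | some x, none =>
    rw [Fintype.sum_option]
    simp only [C_nn, C_sn, C_ns, C_ss, mul_zero, mul_one, zero_add]
    have : ∑ y : ZMod p, χ p (x - y) = ∑ u : ZMod p, χ p u :=
      Fintype.sum_equiv (Equiv.subLeft x) _ _ fun y => rfl
    rw [this, χ_sum p hp2]
    simp
  | some x, some x' =>
    rw [Fintype.sum_option]
    simp only [C_sn, C_ss]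
    by_cases h : x = x'
    · subst h
      simp only [if_pos rfl, smul_eq_mul, mul_one]
      have h1 : ∀ u : ZMod p, χ p u * χ p u = 1 - (if u = 0 then (1:ℝ) else 0) := by
        intro u
        by_cases hu : u = 0
        · simp [hu, χ_zero]
        · simp [hu, χ_sq p hu]
      have h2 : ∑ y : ZMod p, χ p (x - y) * χ p (x - y)
          = ∑ u : ZMod p, χ p u * χ p u :=
        Fintype.sum_equiv (Equiv.subLeft x) _ _ fun y => rfl
      rw [χ_sq p (neg_one_ne_zero' p), h2]
      simp only [h1]
      rw [Finset.sum_sub_distrib, Finset.sum_const, Finset.sum_ite_eq' Finset.univ (0 : ZMod p) (fun _ => (1:ℝ))]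
      simp [ZMod.card]
    · rw [if_neg (by simpa using h)]
      have hb : x' - x ≠ 0 := sub_ne_zero.mpr (Ne.symm h)
      have h2 : ∑ y : ZMod p, χ p (x - y) * χ p (x' - y)
          = ∑ u : ZMod p, χ p u * χ p (u + (x' - x)) :=
        Fintype.sum_equiv (Equiv.subLeft x) _ _ (fun y => by
          simp only [Equiv.subLeft_apply]
          rw [show x' - y = x - y + (x' - x) from by ring])
      rw [χ_sq p (neg_one_ne_zero' p), h2, χ_autocorr p hp2 hb]
      simp

lemma CtC (hp2 : p ≠ 2) : (C p)ᵀ * C p = (p : ℝ) • 1 := by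
  have hp0 : (p : ℝ) ≠ 0 := by
    exact_mod_cast (Fact.out : p.Prime).ne_zero
  have h1 : C p * ((p : ℝ)⁻¹ • (C p)ᵀ) = 1 := by
    rw [Matrix.mul_smul, CCt p hp2, smul_smul, inv_mul_cancel₀ hp0, one_smul]
  have h2 : ((p : ℝ)⁻¹ • (C p)ᵀ) * C p = 1 := mul_eq_one_comm.mp h1
  calc (C p)ᵀ * C p = (p : ℝ) • (((p : ℝ)⁻¹ • (C p)ᵀ) * C p) := by
        rw [Matrix.smul_mul, smul_smul, mul_inv_cancel₀ hp0, one_smul]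
    _ = (p : ℝ) • 1 := by rw [h2]

end Conf

end Stmt15

open Stmt15 in
theorem stmt_15 (p : ℕ) (hp : p.Prime) (hodd : Odd p) :
    ∃ H : Matrix (Fin (2 * (p + 1))) (Fin (2 * (p + 1))) ℝ,
      (∀ i j, H i j = 1 ∨ H i j = -1) ∧
      H * H.transpose = ((2 * (p + 1) : ℕ) : ℝ) • 1 := by
  haveI : Fact p.Prime := ⟨hp⟩
  have hp2 : p ≠ 2 := by rintro rfl; exact (Nat.not_odd_iff_even.mpr (by decide)) hodd
  set M : Matrix (Option (ZMod p) ⊕ Option (ZMod p)) (Option (ZMod p) ⊕ Option (ZMod p)) ℝ :=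
    Matrix.fromBlocks ((C p) + 1) ((C p) - 1) ((C p)ᵀ - 1) (-(C p)ᵀ - 1) with hM
  -- entries of M
  have hMent : ∀ i j, M i j = 1 ∨ M i j = -1 := by
    rintro (i | i) (j | j) <;>
      simp only [hM, Matrix.fromBlocks_apply₁₁, Matrix.fromBlocks_apply₁₂,
        Matrix.fromBlocks_apply₂₁, Matrix.fromBlocks_apply₂₂, Matrix.add_apply,
        Matrix.sub_apply, Matrix.neg_apply, Matrix.one_apply, Matrix.transpose_apply]
    · by_cases h : i = j
      · left; rw [(C_entries p i j).1 h, if_pos h]; ring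
      · rcases (C_entries p i j).2 h with h1 | h1 <;> rw [h1, if_neg h] <;> [left; right] <;> ring
    · by_cases h : i = j
      · right; rw [(C_entries p i j).1 h, if_pos h]; ring
      · rcases (C_entries p i j).2 h with h1 | h1 <;> rw [h1, if_neg h] <;> [left; right] <;> ring
    · by_cases h : j = i
      · right; rw [(C_entries p j i).1 h, if_pos (h.symm ▸ rfl : i = j)]; ring
      · rcases (C_entries p j i).2 h with h1 | h1 <;>
          rw [h1, if_neg (fun hh => h hh.symm)] <;> [left; right] <;> ring
    · by_cases h : j = i
      · right; rw [(C_entries p j i).1 h, if_pos (h.symm ▸ rfl : i = j)]; ring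
      · rcases (C_entries p j i).2 h with h1 | h1 <;>
          rw [h1, if_neg (fun hh => h hh.symm)] <;> [right; left] <;> ring
  -- product
  have hct := CCt p hp2
  have htc := CtC p hp2
  have hprod : M * Mᵀ = ((2 * (p + 1) : ℕ) : ℝ) • 1 := by
    have hMt : Mᵀ = Matrix.fromBlocks ((C p)ᵀ + 1) ((C p) - 1) ((C p)ᵀ - 1) (-(C p) - 1) := by
      rw [hM, Matrix.fromBlocks_transpose]
      simp [Matrix.transpose_add, Matrix.transpose_sub, Matrix.transpose_neg,
        Matrix.transpose_one, Matrix.transpose_transpose]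
    rw [hMt, hM, Matrix.fromBlocks_multiply]
    have e11 : ((C p) + 1) * ((C p)ᵀ + 1) + ((C p) - 1) * ((C p)ᵀ - 1)
        = ((2 * (p + 1) : ℕ) : ℝ) • 1 := by
      have : ((C p) + 1) * ((C p)ᵀ + 1) + ((C p) - 1) * ((C p)ᵀ - 1)
          = ((C p) * (C p)ᵀ + (C p) * (C p)ᵀ) + (1 + 1) := by
        simp only [mul_add, add_mul, sub_mul, mul_sub, mul_one, one_mul]
        abel
      rw [this, hct]
      ext i j
      by_cases h : i = j <;>
        simp [h, Matrix.add_apply, Matrix.smul_apply, Matrix.one_apply, Matrix.mul_apply] <;>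
        push_cast <;> ring
    have a1 : ((C p) + 1) * ((C p) - 1) = (C p) * (C p) - 1 := by
      simp only [mul_sub, add_mul, mul_one, one_mul]; abel
    have a2 : ((C p) - 1) * ((C p) + 1) = (C p) * (C p) - 1 := by
      simp only [mul_add, sub_mul, mul_one, one_mul]; abel
    have b1 : ((C p)ᵀ - 1) * ((C p)ᵀ + 1) = (C p)ᵀ * (C p)ᵀ - 1 := by
      simp only [mul_add, sub_mul, mul_one, one_mul]; abel
    have b2 : ((C p)ᵀ + 1) * ((C p)ᵀ - 1) = (C p)ᵀ * (C p)ᵀ - 1 := by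
      simp only [mul_sub, add_mul, mul_one, one_mul]; abel
    have e12 : ((C p) + 1) * ((C p) - 1) + ((C p) - 1) * (-(C p) - 1) = (0 : Matrix _ _ ℝ) := by
      rw [show (-(C p) - 1 : Matrix _ _ ℝ) = -((C p) + 1) from by abel, Matrix.mul_neg, a1, a2]
      abel
    have e21 : ((C p)ᵀ - 1) * ((C p)ᵀ + 1) + (-(C p)ᵀ - 1) * ((C p)ᵀ - 1) = (0 : Matrix _ _ ℝ) := by
      rw [show (-(C p)ᵀ - 1 : Matrix _ _ ℝ) = -((C p)ᵀ + 1) from by abel, Matrix.neg_mul, b1, b2]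
      abel
    have e22 : ((C p)ᵀ - 1) * ((C p) - 1) + (-(C p)ᵀ - 1) * (-(C p) - 1)
        = ((2 * (p + 1) : ℕ) : ℝ) • 1 := by
      have : ((C p)ᵀ - 1) * ((C p) - 1) + (-(C p)ᵀ - 1) * (-(C p) - 1)
          = ((C p)ᵀ * (C p) + (C p)ᵀ * (C p)) + (1 + 1) := by
        rw [show (-(C p)ᵀ - 1 : Matrix _ _ ℝ) = -((C p)ᵀ + 1) from by abel,
          show (-(C p) - 1 : Matrix _ _ ℝ) = -((C p) + 1) from by abel, Matrix.neg_mul, Matrix.mul_neg, neg_neg]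
        simp only [mul_add, add_mul, sub_mul, mul_sub, mul_one, one_mul]
        abel
      rw [this, htc]
      ext i j
      by_cases h : i = j <;>
        simp [h, Matrix.add_apply, Matrix.smul_apply, Matrix.one_apply, Matrix.mul_apply] <;>
        push_cast <;> ring
    rw [e11, e12, e21, e22, ← Matrix.fromBlocks_one, Matrix.fromBlocks_smul]
    simp
  -- reindex
  have hcard : Fintype.card (Option (ZMod p) ⊕ Option (ZMod p)) = 2 * (p + 1) := by
    simp [ZMod.card]; ring
  let e : (Option (ZMod p) ⊕ Option (ZMod p)) ≃ Fin (2 * (p + 1)) :=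
    Fintype.equivFinOfCardEq hcard
  refine ⟨Matrix.reindex e e M, ?_, ?_⟩
  · intro i j
    simpa [Matrix.reindex_apply, Matrix.submatrix_apply] using hMent (e.symm i) (e.symm j)
  · rw [Matrix.reindex_apply, Matrix.transpose_submatrix, Matrix.submatrix_mul_equiv,
      hprod]
    ext i j
    simp [Matrix.submatrix_apply, Matrix.smul_apply, Matrix.one_apply, Equiv.symm_apply_eq]
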